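/- arXiv:2508.16202 — 2 statements merged into one kernel-verified Lean document; each statement's English description precedes it below -/
import Mathlib

section
/- Let A_t be a Poisson process with rate a and J_t an independent renewal process with inter-arrival times Δ + Exp(h), with 1/a > 1/h + Δ. Let τ = inf{t ≥ 0 : J_t = A_t + 1} be the first time the renewal process exceeds the Poisson process by one. Then τ is finite with probability 1. -/
open MeasureTheory ProbabilityTheory
open scoped NNReal ENNReal

/-- A counting process `N : ℝ → Ω → ℕ` is a Poisson process of rate `r`. -/
structure IsPoissonProcess {Ω : Type*} [MeasurableSpace Ω] (P : Measure Ω)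
    (r : ℝ≥0) (N : ℝ → Ω → ℕ) : Prop where
  measurable : ∀ t, Measurable (N t)
  init : ∀ ω, N 0 ω = 0
  mono : ∀ ω, Monotone fun t => N t ω
  indep_increments : ∀ s₁ t₁ s₂ t₂ : ℝ, s₁ ≤ t₁ → t₁ ≤ s₂ → s₂ ≤ t₂ →
    IndepFun (fun ω => N t₁ ω - N s₁ ω) (fun ω => N t₂ ω - N s₂ ω) P
  poisson_law : ∀ s t : ℝ, 0 ≤ s → s ≤ t → ∀ k : ℕ,
    P {ω | N t ω - N s ω = k} = poissonPMF (r * (t - s).toNNReal) k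

/-- The law of `Δ + X` where `X` is exponential with rate `h`:
the measure on `ℝ` with density `h e^{-h(t-Δ)} 1{t > Δ}`. -/
noncomputable def shiftedExpMeasure (h Δ : ℝ) : Measure ℝ :=
  volume.withDensity fun t =>
    ENNReal.ofReal (if Δ < t then h * Real.exp (-h * (t - Δ)) else 0)

/-- The renewal counting process built from interarrival times `X`:
`renewalCount X t ω` is the number of renewals in `(0, t]`. -/
noncomputable def renewalCount {Ω : Type*} (X : ℕ → Ω → ℝ) (t : ℝ) (ω : Ω) : ℕ :=
  sSup {n : ℕ | ∑ i ∈ Finset.range n, X i ω ≤ t}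

section NakamotoAux

open Filter Real Set
open scoped Topology

/-- The shifted exponential law is integrable with mean `Δ + 1/h`. -/
lemma nakamoto_shiftedExp_mean (h Δ : ℝ) (hh : 0 < h) (hΔ : 0 ≤ Δ) :
    Integrable (fun x : ℝ => x) (shiftedExpMeasure h Δ) ∧
      ∫ x, x ∂(shiftedExpMeasure h Δ) = Δ + 1/h := by
  have key : IntegrableOn (fun t => h * Real.exp (-h*(t-Δ)) * t) (Ioi Δ) volume ∧
      ∫ t in Ioi Δ, h * Real.exp (-h*(t-Δ)) * t = Δ + 1/h := by
    set F : ℝ → ℝ := fun t => -(t + 1/h) * Real.exp (-h*(t-Δ)) with hF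
    have hderiv : ∀ x ∈ Ici Δ, HasDerivAt F (h * Real.exp (-h*(x-Δ)) * x) x := by
      intro x _
      have hv : HasDerivAt (fun t : ℝ => Real.exp (-h*(t-Δ))) (-h * Real.exp (-h*(x-Δ))) x := by
        have h1 : HasDerivAt (fun t : ℝ => -h*(t-Δ)) (-h) x := by
          simpa using (((hasDerivAt_id x).sub_const Δ).const_mul (-h))
        simpa [mul_comm] using h1.exp
      have hu : HasDerivAt (fun t : ℝ => -(t + 1/h)) (-1) x := by
        exact ((hasDerivAt_id x).add_const (1/h)).neg
      have : HasDerivAt (fun t => -(t + 1/h) * Real.exp (-h*(t-Δ)))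
          (-1 * Real.exp (-h*(x-Δ)) + -(x + 1/h) * (-h * Real.exp (-h*(x-Δ)))) x := hu.mul hv
      convert this using 1
      have hk : h * (1/h) = 1 := mul_one_div_cancel hh.ne'
      linear_combination (-(Real.exp (-h*(x-Δ)))) * hk
    have hnonneg : ∀ x ∈ Ioi Δ, 0 ≤ h * Real.exp (-h*(x-Δ)) * x := by
      intro x hx
      have : (0:ℝ) ≤ x := le_trans hΔ (le_of_lt hx)
      positivity
    have htends : Tendsto F atTop (𝓝 0) := by
      have base : Tendsto (fun y : ℝ => y * Real.exp (-y)) atTop (𝓝 0) := by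
        simpa using tendsto_pow_mul_exp_neg_atTop_nhds_zero 1
      have hmul : Tendsto (fun t : ℝ => h * t) atTop atTop :=
        Tendsto.const_mul_atTop hh tendsto_id
      have c1 : Tendsto (fun t : ℝ => (h*t) * Real.exp (-(h*t))) atTop (𝓝 0) := base.comp hmul
      have c2 : Tendsto (fun t : ℝ => Real.exp (-(h*t))) atTop (𝓝 0) :=
        Real.tendsto_exp_neg_atTop_nhds_zero.comp hmul
      have comb : Tendsto (fun t : ℝ =>
          -((Real.exp (h*Δ)/h) * ((h*t) * Real.exp (-(h*t)))
            + (1/h * Real.exp (h*Δ)) * Real.exp (-(h*t)))) atTop (𝓝 0) := by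
        have := ((c1.const_mul (Real.exp (h*Δ)/h)).add
          (c2.const_mul (1/h * Real.exp (h*Δ)))).neg
        simpa using this
      refine comb.congr (fun t => ?_)
      have hexp : Real.exp (-h*(t-Δ)) = Real.exp (h*Δ) * Real.exp (-(h*t)) := by
        rw [← Real.exp_add]; ring_nf
      rw [hF]
      simp only [hexp]
      field_simp
    have hcont : ContinuousWithinAt F (Ici Δ) Δ :=
      ((hderiv Δ (self_mem_Ici)).continuousAt).continuousWithinAt
    have hint : IntegrableOn (fun t => h * Real.exp (-h*(t-Δ)) * t) (Ioi Δ) volume :=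
      integrableOn_Ioi_deriv_of_nonneg hcont (fun x hx => hderiv x (mem_Ici.mpr (le_of_lt hx))) hnonneg htends
    refine ⟨hint, ?_⟩
    have := integral_Ioi_of_hasDerivAt_of_nonneg hcont
      (fun x hx => hderiv x (mem_Ici.mpr (le_of_lt hx))) hnonneg htends
    rw [this, hF]
    simp [Real.exp_zero]
  obtain ⟨hint, hval⟩ := key
  set d : ℝ → ℝ := fun t => if Δ < t then h * Real.exp (-h*(t-Δ)) else 0 with hd
  have hdnn : ∀ t, 0 ≤ d t := by
    intro t; rw [hd]; dsimp only; split
    · positivity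
    · exact le_rfl
  have hdm : Measurable d := by
    apply Measurable.ite (measurableSet_Ioi) _ measurable_const
    exact (measurable_id.sub_const Δ).const_mul (-h) |>.exp.const_mul h
  have hmeq : shiftedExpMeasure h Δ = volume.withDensity fun t => ((d t).toNNReal : ℝ≥0∞) := rfl
  have htn : Measurable fun t => (d t).toNNReal := hdm.real_toNNReal
  have hsmul : (fun t => (d t).toNNReal • t) = fun t => d t * t := by
    funext t
    rw [NNReal.smul_def, Real.coe_toNNReal _ (hdnn t), smul_eq_mul]
  have hdt : (fun t => d t * t) = Set.indicator (Ioi Δ) (fun t => h * Real.exp (-h*(t-Δ)) * t) := by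
    funext t
    rw [hd, Set.indicator_apply]
    simp only [mem_Ioi]
    split <;> simp
  have hintegrable : Integrable (fun t => d t * t) volume := by
    rw [hdt, integrable_indicator_iff measurableSet_Ioi]
    exact hint
  constructor
  · rw [hmeq, integrable_withDensity_iff_integrable_smul htn]
    rwa [hsmul]
  · rw [hmeq, integral_withDensity_eq_integral_smul htn, hsmul, hdt,
      integral_indicator measurableSet_Ioi, hval]

/-- A measure on `ℕ` whose singletons carry the Poisson pmf has mean `a`. -/
lemma nakamoto_poisson_mean (a : ℝ≥0) (ν : Measure ℕ) (hν : ∀ n, ν {n} = poissonPMF a n) :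
    Integrable (fun n : ℕ => (n:ℝ)) ν ∧ ∫ n, (n:ℝ) ∂ν = a := by
  -- the real series
  set f : ℕ → ℝ := fun n => (n:ℝ) * poissonPMFReal a n with hf
  have hshift : ∀ m : ℕ, f (m+1) = a * poissonPMFReal a m := by
    intro m
    rw [hf]; dsimp only
    unfold poissonPMFReal
    rw [Nat.factorial_succ]
    push_cast
    have : (m:ℝ) + 1 ≠ 0 := by positivity
    field_simp
    ring
  have hs0 : Summable (fun m => (a:ℝ) * poissonPMFReal a m) :=
    ((poissonPMFRealSum a).summable).mul_left _
  have hsum : Summable f := by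
    rw [← summable_nat_add_iff 1]
    exact hs0.congr (fun m => (hshift m).symm)
  have hts : ∑' n : ℕ, f n = a := by
    rw [hsum.tsum_eq_zero_add]
    have h0 : f 0 = 0 := by simp [hf]
    rw [h0, zero_add]
    calc ∑' m, f (m+1) = ∑' m, (a:ℝ) * poissonPMFReal a m := tsum_congr hshift
      _ = (a:ℝ) * ∑' m, poissonPMFReal a m := by rw [tsum_mul_left]
      _ = a := by rw [show ∑' m, poissonPMFReal a m = 1 from (poissonPMFRealSum a).tsum_eq, mul_one]
  have hpmf : ∀ n, (poissonPMF a n : ℝ≥0∞) = ENNReal.ofReal (poissonPMFReal a n) := fun n => rfl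
  have hInt : Integrable (fun n : ℕ => (n:ℝ)) ν := by
    refine ⟨(measurable_from_top (f := fun n : ℕ => (n:ℝ))).aestronglyMeasurable, ?_⟩
    rw [hasFiniteIntegral_def]
    rw [lintegral_countable' (fun n : ℕ => ‖(n:ℝ)‖ₑ)]
    have heq : ∀ n : ℕ, ‖(n:ℝ)‖ₑ * ν {n} = ENNReal.ofReal (f n) := by
      intro n
      rw [hν n, hpmf n, hf]; dsimp only
      rw [ENNReal.ofReal_mul (Nat.cast_nonneg n)]
      congr 1
      simp
    rw [tsum_congr heq, ← ENNReal.ofReal_tsum_of_nonneg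
      (fun n => mul_nonneg (Nat.cast_nonneg n) poissonPMFReal_nonneg) hsum]
    exact ENNReal.ofReal_lt_top
  refine ⟨hInt, ?_⟩
  rw [integral_countable' hInt]
  have heq2 : ∀ n : ℕ, ν.real {n} • (n:ℝ) = f n := by
    intro n
    rw [measureReal_def, hν n, hpmf n, ENNReal.toReal_ofReal poissonPMFReal_nonneg, smul_eq_mul, hf]
    dsimp only
    rw [mul_comm]
  rw [tsum_congr heq2, hts]

/-- Deterministic crossing lemma: if the counting process grows at rate `La`, the renewal
times at rate `Lx`, and `La * Lx < 1`, then at some renewal time the count is below `n`. -/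
lemma nakamoto_exists_crossing {f : ℝ → ℕ} (hf : Monotone f) {S : ℕ → ℝ} (hS0 : ∀ n, 0 ≤ S n)
    {La Lx : ℝ} (hLx : 0 < Lx) (hprod : La * Lx < 1)
    (hA : Tendsto (fun m : ℕ => (f m : ℝ)/m) atTop (𝓝 La))
    (hX : Tendsto (fun n : ℕ => S n / n) atTop (𝓝 Lx)) :
    ∃ n, f (S n) < n := by
  have hStop : Tendsto S atTop atTop := by
    have hlow : ∀ᶠ n : ℕ in atTop, (n:ℝ) * (Lx/2) ≤ S n := by
      have hev : ∀ᶠ n : ℕ in atTop, Lx/2 < S n / n :=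
        hX.eventually (eventually_gt_nhds (by linarith))
      filter_upwards [hev, eventually_gt_atTop 0] with n hn hn0
      have hnpos : (0:ℝ) < n := by exact_mod_cast hn0
      rw [lt_div_iff₀ hnpos] at hn
      nlinarith
    have : Tendsto (fun n : ℕ => (n:ℝ) * (Lx/2)) atTop atTop :=
      Tendsto.atTop_mul_const (by linarith) tendsto_natCast_atTop_atTop
    exact tendsto_atTop_mono' atTop hlow this
  have hceil : Tendsto (fun n => ⌈S n⌉₊) atTop atTop :=
    tendsto_nat_ceil_atTop.comp hStop
  have hAc : Tendsto (fun n => (f (⌈S n⌉₊ : ℕ) : ℝ) / (⌈S n⌉₊ : ℕ)) atTop (𝓝 La) :=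
    hA.comp hceil
  have hratio : Tendsto (fun n : ℕ => ((⌈S n⌉₊ : ℕ) : ℝ) / n) atTop (𝓝 Lx) := by
    have hub : Tendsto (fun n : ℕ => (S n + 1) / n) atTop (𝓝 Lx) := by
      have h1 : Tendsto (fun n : ℕ => S n / n + 1 / n) atTop (𝓝 (Lx + 0)) :=
        hX.add (tendsto_one_div_atTop_nhds_zero_nat)
      rw [add_zero] at h1
      refine h1.congr' ?_
      filter_upwards [eventually_gt_atTop 0] with n hn
      have hnpos : ((n:ℝ)) ≠ 0 := by positivity
      field_simp
    refine tendsto_of_tendsto_of_tendsto_of_le_of_le' hX hub ?_ ?_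
    · filter_upwards [eventually_gt_atTop 0] with n hn
      have hnpos : (0:ℝ) < n := by exact_mod_cast hn
      gcongr
      exact Nat.le_ceil _
    · filter_upwards [eventually_gt_atTop 0] with n hn
      have hnpos : (0:ℝ) < n := by exact_mod_cast hn
      gcongr
      exact (Nat.ceil_lt_add_one (hS0 n)).le
  have hmul : Tendsto (fun n => ((f (⌈S n⌉₊ : ℕ) : ℝ) / (⌈S n⌉₊ : ℕ)) * (((⌈S n⌉₊ : ℕ):ℝ)/n))
      atTop (𝓝 (La * Lx)) := hAc.mul hratio
  have hfinal : Tendsto (fun n : ℕ => (f (⌈S n⌉₊ : ℕ) : ℝ) / n) atTop (𝓝 (La * Lx)) := by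
    refine hmul.congr' ?_
    filter_upwards [hceil.eventually_ge_atTop 1] with n hn
    have hne : ((⌈S n⌉₊:ℕ):ℝ) ≠ 0 := by
      have : (0:ℕ) < ⌈S n⌉₊ := hn
      positivity
    field_simp
  have hev : ∀ᶠ n : ℕ in atTop, (f (⌈S n⌉₊ : ℕ) : ℝ) / n < 1 :=
    hfinal.eventually (eventually_lt_nhds hprod)
  obtain ⟨n, hn1, hn0⟩ := (hev.and (eventually_gt_atTop 0)).exists
  refine ⟨n, ?_⟩
  have hnpos : (0:ℝ) < n := by exact_mod_cast hn0
  rw [div_lt_one hnpos] at hn1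
  have hle : f (S n) ≤ f (⌈S n⌉₊ : ℕ) := hf (Nat.le_ceil _)
  have : (f (⌈S n⌉₊:ℕ) : ℕ) < n := by exact_mod_cast hn1
  omega

end NakamotoAux

/-- **Finiteness of the Nakamoto stopping time.**
Let `A` be a Poisson process of rate `a` and `J` an independent renewal process
with inter-arrival times `Δ + Exp(h)`, where `1/a > 1/h + Δ`.  Let
`τ = inf{t ≥ 0 : J_t = A_t + 1}` be the first time the renewal process
exceeds the Poisson process by one.  Then `τ` is finite with probability one,
i.e. almost surely the set `{t ≥ 0 : J_t = A_t + 1}` is nonempty. -/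
theorem nakamoto_stopping_time_finite
    {Ω : Type*} [MeasurableSpace Ω] (P : Measure Ω) [IsProbabilityMeasure P]
    (a h : ℝ≥0) (ha : 0 < a) (hh : 0 < h) (Δ : ℝ) (hΔ : 0 ≤ Δ)
    (hfault : 1 / (a : ℝ) > 1 / (h : ℝ) + Δ)
    (A : ℝ → Ω → ℕ) (hA : IsPoissonProcess P a A)
    (X : ℕ → Ω → ℝ) (hXmeas : ∀ n, Measurable (X n))
    (hXiid : iIndepFun X P)
    (hXlaw : ∀ n, P.map (X n) = shiftedExpMeasure h Δ)
    (hAX : IndepFun (fun ω t => A t ω) (fun ω n => X n ω) P) :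
    ∀ᵐ ω ∂P,
      {t : ℝ | 0 ≤ t ∧ renewalCount X t ω = A t ω + 1}.Nonempty := by
  classical
  have hh' : (0:ℝ) < h := hh
  have ha' : (0:ℝ) < a := ha
  obtain ⟨hXint', hXmean⟩ := nakamoto_shiftedExp_mean (h:ℝ) Δ hh' hΔ
  -- SLLN for the interarrival times X
  have hintX : Integrable (X 0) P := by
    have hmap := integrable_map_measure (μ := P) (f := X 0) (g := fun x : ℝ => x)
      aestronglyMeasurable_id (hXmeas 0).aemeasurable
    rw [hXlaw 0] at hmap
    exact hmap.mp hXint'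
  have hEX : (∫ ω, X 0 ω ∂P) = Δ + 1/(h:ℝ) := by
    have hmap := integral_map (μ := P) (φ := X 0) (hXmeas 0).aemeasurable
      (f := fun x : ℝ => x) aestronglyMeasurable_id
    rw [hXlaw 0] at hmap
    rw [← hmap, hXmean]
  have hidentX : ∀ i, IdentDistrib (X i) (X 0) P P := fun i =>
    ⟨(hXmeas i).aemeasurable, (hXmeas 0).aemeasurable, by rw [hXlaw i, hXlaw 0]⟩
  have hsllnX : ∀ᵐ ω ∂P, Filter.Tendsto (fun n : ℕ => (∑ i ∈ Finset.range n, X i ω) / n)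
      Filter.atTop (nhds (Δ + 1/(h:ℝ))) := by
    have := strong_law_ae_real X hintX (fun i j hij => hXiid.indepFun hij) hidentX
    rw [hEX] at this
    exact this
  -- SLLN for the Poisson process
  set Y : ℕ → Ω → ℕ := fun k ω => A ((k:ℝ)+1) ω - A (k:ℝ) ω with hY
  have hYmeas : ∀ k, Measurable (Y k) := fun k =>
    (hA.measurable _).sub (hA.measurable _)
  have hlawY : ∀ k j, P.map (Y k) {j} = poissonPMF a j := by
    intro k j
    rw [Measure.map_apply (hYmeas k) (measurableSet_singleton j)]
    have h0 : (0:ℝ) ≤ (k:ℝ) := Nat.cast_nonneg k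
    have hpl := hA.poisson_law (k:ℝ) ((k:ℝ)+1) h0 (by linarith) j
    have harg : (a * ((k:ℝ)+1 - (k:ℝ)).toNNReal) = a := by
      rw [add_sub_cancel_left, Real.toNNReal_one, mul_one]
    rw [harg] at hpl
    rw [← hpl]
    rfl
  have hmapY : ∀ k, P.map (Y k) = P.map (Y 0) := fun k =>
    MeasureTheory.Measure.ext_of_singleton (fun j => by rw [hlawY k j, hlawY 0 j])
  obtain ⟨hνint, hνmean⟩ := nakamoto_poisson_mean a (P.map (Y 0)) (hlawY 0)
  set Z : ℕ → Ω → ℝ := fun k ω => ((Y k ω : ℕ) : ℝ) with hZ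
  have hcm : Measurable (fun n : ℕ => (n:ℝ)) := measurable_from_top
  have hZmeas : ∀ k, Measurable (Z k) := fun k => hcm.comp (hYmeas k)
  have hintZ : Integrable (Z 0) P := by
    have hmap := integrable_map_measure (μ := P) (f := Y 0) (g := fun n : ℕ => (n:ℝ))
      hcm.aestronglyMeasurable (hYmeas 0).aemeasurable
    exact hmap.mp hνint
  have hEZ : (∫ ω, Z 0 ω ∂P) = (a:ℝ) := by
    have hmap := integral_map (μ := P) (φ := Y 0) (hYmeas 0).aemeasurable
      (f := fun n : ℕ => (n:ℝ)) hcm.aestronglyMeasurable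
    rw [← hmap, hνmean]
  have hindepZ : Pairwise (Function.onFun (fun f g => IndepFun f g P) Z) := by
    have key : ∀ i j : ℕ, i < j → IndepFun (Z i) (Z j) P := by
      intro i j hij
      have hinc := hA.indep_increments (i:ℝ) ((i:ℝ)+1) (j:ℝ) ((j:ℝ)+1)
        (by linarith) (by exact_mod_cast Nat.succ_le_of_lt hij) (by linarith)
      exact hinc.comp hcm hcm
    intro i j hij
    rcases hij.lt_or_gt with h' | h'
    · exact key i j h'
    · exact (key j i h').symm
  have hidentZ : ∀ i, IdentDistrib (Z i) (Z 0) P P := fun i =>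
    ⟨(hZmeas i).aemeasurable, (hZmeas 0).aemeasurable, by
      show (P.map ((fun n : ℕ => (n:ℝ)) ∘ Y i)) = (P.map ((fun n : ℕ => (n:ℝ)) ∘ Y 0))
      rw [← Measure.map_map hcm (hYmeas i), ← Measure.map_map hcm (hYmeas 0), hmapY i]⟩
  have htel : ∀ ω (m : ℕ), (∑ k ∈ Finset.range m, Z k ω) = (A (m:ℝ) ω : ℝ) := by
    intro ω m
    induction m with
    | zero => simp [hA.init ω]
    | succ m ih =>
      rw [Finset.sum_range_succ, ih]
      have hle : A ((m:ℝ)) ω ≤ A ((m:ℝ)+1) ω := hA.mono ω (by linarith)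
      have hcast : (Z m ω) = (A ((m:ℝ)+1) ω : ℝ) - (A (m:ℝ) ω : ℝ) := by
        rw [hZ]; dsimp only; rw [hY]; dsimp only
        exact_mod_cast Nat.cast_sub hle
      rw [hcast]
      push_cast
      ring
  have hsllnA : ∀ᵐ ω ∂P, Filter.Tendsto (fun m : ℕ => ((A (m:ℝ) ω : ℕ) : ℝ) / m)
      Filter.atTop (nhds (a:ℝ)) := by
    have hs := strong_law_ae_real Z hintZ hindepZ hidentZ
    rw [hEZ] at hs
    filter_upwards [hs] with ω hω
    refine hω.congr (fun m => ?_)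
    rw [htel ω m]
  -- a.s. positivity of interarrival times
  have hposX : ∀ᵐ ω ∂P, ∀ i, 0 < X i ω := by
    rw [MeasureTheory.ae_all_iff]
    intro i
    rw [MeasureTheory.ae_iff]
    have hset : {ω | ¬ (0 < X i ω)} = X i ⁻¹' (Set.Iic 0) := by
      ext ω; simp [not_lt]
    rw [hset, ← Measure.map_apply (hXmeas i) measurableSet_Iic, hXlaw i]
    simp only [shiftedExpMeasure]
    rw [withDensity_apply _ measurableSet_Iic]
    have hzero : ∀ t ∈ Set.Iic (0:ℝ),
        ENNReal.ofReal (if Δ < t then (h:ℝ) * Real.exp (-(h:ℝ) * (t - Δ)) else 0) = 0 := by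
      intro t ht
      rw [if_neg (by simp only [Set.mem_Iic] at ht; linarith), ENNReal.ofReal_zero]
    rw [setLIntegral_congr_fun measurableSet_Iic hzero,
      lintegral_zero]
  -- the product condition
  have hLx : (0:ℝ) < Δ + 1/(h:ℝ) := by positivity
  have hprod : (a:ℝ) * (Δ + 1/(h:ℝ)) < 1 := by
    have h1 : (a:ℝ) * (Δ + 1/(h:ℝ)) < (a:ℝ) * (1/(a:ℝ)) := by
      apply mul_lt_mul_of_pos_left _ ha'
      linarith
    have h2 : (a:ℝ) * (1/(a:ℝ)) = 1 := by field_simp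
    linarith
  -- combine
  filter_upwards [hposX, hsllnX, hsllnA] with ω h1 h2 h3
  set S : ℕ → ℝ := fun n => ∑ i ∈ Finset.range n, X i ω with hS
  have hS0 : ∀ n, 0 ≤ S n := fun n => Finset.sum_nonneg (fun i _ => (h1 i).le)
  have hcross : ∃ n, A (S n) ω < n := by
    refine nakamoto_exists_crossing (f := fun t => A t ω) (hA.mono ω) hS0 hLx hprod ?_ h2
    exact h3
  set n0 := Nat.find hcross with hn0
  have hspec : A (S n0) ω < n0 := Nat.find_spec hcross
  have hne : n0 ≠ 0 := by
    intro h0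
    rw [h0] at hspec
    omega
  obtain ⟨m, hm⟩ : ∃ m, n0 = m + 1 := ⟨n0 - 1, by omega⟩
  have hmin : ¬ (A (S m) ω < m) := Nat.find_min hcross (by omega)
  rw [hm] at hspec
  have hSmono : S m ≤ S (m+1) := by
    rw [hS]; dsimp only
    rw [Finset.sum_range_succ]
    linarith [h1 m]
  have hAmono : A (S m) ω ≤ A (S (m+1)) ω := hA.mono ω hSmono
  have hAval : A (S (m+1)) ω = m := by omega
  have hstrict : StrictMono S := by
    apply strictMono_nat_of_lt_succ
    intro n
    rw [hS]; dsimp only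
    rw [Finset.sum_range_succ]
    linarith [h1 n]
  refine ⟨S (m+1), hS0 (m+1), ?_⟩
  have hsetIic : {k : ℕ | ∑ i ∈ Finset.range k, X i ω ≤ S (m+1)} = Set.Iic (m+1) := by
    ext k
    simp only [Set.mem_setOf_eq, Set.mem_Iic]
    exact hstrict.le_iff_le
  rw [renewalCount, hsetIic, csSup_Iic, hAval]
end

section
/- Fix λ = a + h > 0 and Δ > 0. For each integer l > 0, the conditional pmf P_{W|L}(·|l) defined by: P(w) = Poisson(aΔ)(w) for w < l; P(l) = ∫_0^Δ f_2(t; l, a) e^{-λ(Δ-t)} dt; and P(w) = ∫_0^Δ f_2(t; l, a) ∫_0^{Δ-t} λ e^{-λ s} Poisson(a(Δ - t - s))(w - l - 1) ds dt for w > l, where f_2(·; l, a) is the Erlang density with shape l and rate a, is a genuine probability mass function: all values are nonnegative and Σ_{w=0}^{∞} P_{W|L}(w|l) = 1. -/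
open MeasureTheory intervalIntegral

/-- The Poisson pmf with mean `μ`: `e^{-μ} μ^k / k!`. -/
noncomputable def poissonProb (μ : ℝ) (k : ℕ) : ℝ :=
  Real.exp (-μ) * μ ^ k / (Nat.factorial k)

/-- The Erlang density with shape `l` and rate `a`:
`f₂(t; l, a) = a^l t^{l-1} e^{-a t} / (l-1)!`. -/
noncomputable def erlangPDF (l : ℕ) (a t : ℝ) : ℝ :=
  a ^ l * t ^ (l - 1) * Real.exp (-a * t) / (Nat.factorial (l - 1))

/-- The conditional pmf `P_{W|L}(· | l)` for `l > 0`: the number of heights the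
adversarial branch gains during a window of length `Δ` when it starts `l`
heights behind the public height. -/
noncomputable def PWL (a lam Δ : ℝ) (l : ℕ) (w : ℕ) : ℝ :=
  if w < l then poissonProb (a * Δ) w
  else if w = l then
    ∫ t in (0 : ℝ)..Δ, erlangPDF l a t * Real.exp (-lam * (Δ - t))
  else
    ∫ t in (0 : ℝ)..Δ, erlangPDF l a t *
      ∫ s in (0 : ℝ)..(Δ - t),
        lam * Real.exp (-lam * s) * poissonProb (a * (Δ - t - s)) (w - l - 1)

lemma poissonProb_nonneg {μ : ℝ} (hμ : 0 ≤ μ) (k : ℕ) : 0 ≤ poissonProb μ k := by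
  unfold poissonProb; positivity

lemma hasSum_pow_div_factorial (x : ℝ) :
    HasSum (fun n : ℕ => x ^ n / n.factorial) (Real.exp x) := by
  rw [Real.exp_eq_exp_ℝ]
  exact NormedSpace.expSeries_div_hasSum_exp x

lemma hasSum_poissonProb (μ : ℝ) : HasSum (fun k => poissonProb μ k) 1 := by
  have h := (hasSum_pow_div_factorial μ).mul_left (Real.exp (-μ))
  have he : Real.exp (-μ) * Real.exp μ = 1 := by
    rw [← Real.exp_add]; simp
  rw [he] at h
  refine h.congr_fun fun k => ?_
  simp [poissonProb, mul_div_assoc]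

lemma continuous_poissonProb (k : ℕ) : Continuous (fun μ => poissonProb μ k) := by
  unfold poissonProb; fun_prop

lemma continuous_erlangPDF (l : ℕ) (a : ℝ) : Continuous (erlangPDF l a) := by
  unfold erlangPDF; fun_prop

lemma erlangPDF_nonneg {l : ℕ} {a t : ℝ} (ha : 0 ≤ a) (ht : 0 ≤ t) : 0 ≤ erlangPDF l a t := by
  unfold erlangPDF; positivity

lemma poissonProb_le {μ c : ℝ} (h0 : 0 ≤ μ) (h1 : μ ≤ c) (j : ℕ) :
    poissonProb μ j ≤ c ^ j / j.factorial := by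
  unfold poissonProb
  have he : Real.exp (-μ) ≤ 1 := Real.exp_le_one_iff.mpr (by linarith)
  calc Real.exp (-μ) * μ ^ j / j.factorial ≤ 1 * c ^ j / j.factorial := by
        gcongr
    _ = c ^ j / j.factorial := by ring

lemma erlangPDF_eq {l : ℕ} (hl : 0 < l) (a t : ℝ) :
    erlangPDF l a t = a * poissonProb (a * t) (l - 1) := by
  unfold erlangPDF poissonProb
  rw [mul_pow, show a ^ l = a * a ^ (l - 1) by
    rw [← pow_succ']; congr 1; omega]
  ring

lemma hasDerivAt_poissonProb (a : ℝ) (k : ℕ) (t : ℝ) :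
    HasDerivAt (fun t => poissonProb (a * t) k)
      ((Real.exp (-(a * t)) * (-a) * (a * t) ^ k
        + Real.exp (-(a * t)) * ((k : ℝ) * (a * t) ^ (k - 1) * a)) / (Nat.factorial k)) t := by
  have hat : HasDerivAt (fun t : ℝ => a * t) a t := by
    simpa using (hasDerivAt_id t).const_mul a
  have he : HasDerivAt (fun t : ℝ => Real.exp (-(a * t))) (Real.exp (-(a * t)) * (-a)) t :=
    (Real.hasDerivAt_exp _).comp t hat.neg
  have hp : HasDerivAt (fun t : ℝ => (a * t) ^ k) ((k : ℝ) * (a * t) ^ (k - 1) * a) t :=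
    (hasDerivAt_pow k (a * t)).comp t hat
  have := (he.mul hp).div_const (Nat.factorial k : ℝ)
  simpa [poissonProb] using this

lemma deriv_val (a t : ℝ) {k : ℕ} (hk : 0 < k) :
    (Real.exp (-(a * t)) * (-a) * (a * t) ^ k
        + Real.exp (-(a * t)) * ((k : ℝ) * (a * t) ^ (k - 1) * a)) / (Nat.factorial k)
      = a * poissonProb (a * t) (k - 1) - a * poissonProb (a * t) k := by
  obtain ⟨m, rfl⟩ : ∃ m, k = m + 1 := ⟨k - 1, by omega⟩
  simp only [poissonProb, Nat.add_sub_cancel, Nat.factorial_succ, Nat.cast_mul,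
    Nat.cast_add, Nat.cast_one]
  have hm : (Nat.factorial m : ℝ) ≠ 0 := by positivity
  have hm1 : ((m : ℝ) + 1) ≠ 0 := by positivity
  field_simp
  ring

lemma hasDerivAt_sum_poisson (a : ℝ) {l : ℕ} (hl : 0 < l) (t : ℝ) :
    HasDerivAt (fun t => ∑ k ∈ Finset.range l, poissonProb (a * t) k)
      (-(a * poissonProb (a * t) (l - 1))) t := by
  induction l with
  | zero => omega
  | succ n ih =>
    have heq : (fun t => ∑ k ∈ Finset.range (n + 1), poissonProb (a * t) k)
        = fun t => (∑ k ∈ Finset.range n, poissonProb (a * t) k) + poissonProb (a * t) n := by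
      funext t; exact Finset.sum_range_succ _ n
    rw [heq]
    rcases Nat.eq_zero_or_pos n with hn | hn
    · subst hn
      have h0 := hasDerivAt_poissonProb a 0 t
      simp only [pow_zero, Nat.cast_zero, zero_mul, mul_zero, add_zero, Nat.factorial_zero,
        Nat.cast_one, div_one, mul_one] at h0
      have : (fun t : ℝ => (∑ k ∈ Finset.range 0, poissonProb (a * t) k) + poissonProb (a * t) 0)
          = fun t => (0 : ℝ) + poissonProb (a * t) 0 := by
        funext t; simp
      rw [this]
      have := (hasDerivAt_const t (0 : ℝ)).add h0
      exact this.congr_deriv (by simp [poissonProb, mul_comm])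
    · have h1 := ih hn
      have h2 := hasDerivAt_poissonProb a n t
      rw [deriv_val a t hn] at h2
      have h3 := h1.add h2
      have : n + 1 - 1 = n := by omega
      exact h3.congr_deriv (by rw [this]; ring)

lemma sum_poisson_zero {l : ℕ} (hl : 0 < l) :
    ∑ k ∈ Finset.range l, poissonProb 0 k = 1 := by
  rw [Finset.sum_eq_single 0]
  · simp [poissonProb]
  · intro k _ hk
    simp [poissonProb, zero_pow hk]
  · intro h
    exact absurd (Finset.mem_range.mpr hl) h

lemma integral_erlang (a : ℝ) {l : ℕ} (hl : 0 < l) (Δ : ℝ) :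
    ∫ t in (0:ℝ)..Δ, erlangPDF l a t
      = 1 - ∑ k ∈ Finset.range l, poissonProb (a * Δ) k := by
  have hd : ∀ t ∈ Set.uIcc (0:ℝ) Δ,
      HasDerivAt (fun t => -∑ k ∈ Finset.range l, poissonProb (a * t) k) (erlangPDF l a t) t := by
    intro t _
    have := (hasDerivAt_sum_poisson a hl t).neg
    rw [neg_neg] at this
    rw [erlangPDF_eq hl]
    exact this
  have hint : IntervalIntegrable (fun t => erlangPDF l a t) volume 0 Δ := by
    apply Continuous.intervalIntegrable
    unfold erlangPDF; fun_prop
  have h := intervalIntegral.integral_eq_sub_of_hasDerivAt hd hint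
  rw [h]
  have h0 : ∑ k ∈ Finset.range l, poissonProb (a * 0) k = 1 := by
    rw [mul_zero]; exact sum_poisson_zero hl
  rw [h0]; ring

lemma integral_exp_lam (lam u : ℝ) :
    ∫ s in (0:ℝ)..u, lam * Real.exp (-lam * s) = 1 - Real.exp (-lam * u) := by
  have hd : ∀ s ∈ Set.uIcc (0:ℝ) u,
      HasDerivAt (fun s => -Real.exp (-lam * s)) (lam * Real.exp (-lam * s)) s := by
    intro s _
    have h1 : HasDerivAt (fun s : ℝ => -lam * s) (-lam) s := by
      simpa using (hasDerivAt_id s).const_mul (-lam)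
    have := ((Real.hasDerivAt_exp (-lam * s)).comp s h1).neg
    exact this.congr_deriv (by ring)
  have hint : IntervalIntegrable (fun s => lam * Real.exp (-lam * s)) volume 0 u := by
    apply Continuous.intervalIntegrable; fun_prop
  have h := intervalIntegral.integral_eq_sub_of_hasDerivAt hd hint
  rw [h]
  simp only [mul_zero, Real.exp_zero, neg_mul]
  ring

/-- **`P_{W|L}(· | l)` is a genuine probability mass function.**
For rates `a, h > 0` with `λ = a + h`, a window `Δ > 0`, and any integer
`l > 0`, the conditional pmf `P_{W|L}(· | l)` is nonnegative and sums to `1`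
over `w ∈ ℕ`. -/
theorem PWL_is_pmf (a h Δ : ℝ) (ha : 0 < a) (hh : 0 < h) (hΔ : 0 < Δ)
    (lam : ℝ) (hlam : lam = a + h) (l : ℕ) (hl : 0 < l) :
    (∀ w : ℕ, 0 ≤ PWL a lam Δ l w) ∧
    (∑' w : ℕ, PWL a lam Δ l w) = 1 := by
  have hlam0 : 0 < lam := by rw [hlam]; linarith
  have hΔ0 : (0:ℝ) ≤ Δ := hΔ.le
  have ha0 : (0:ℝ) ≤ a := ha.le
  -- nonnegativity
  have hnonneg : ∀ w, 0 ≤ PWL a lam Δ l w := by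
    intro w
    unfold PWL
    split_ifs with h1 h2
    · exact poissonProb_nonneg (by positivity) w
    · apply intervalIntegral.integral_nonneg hΔ0
      intro t ht
      exact mul_nonneg (erlangPDF_nonneg ha0 ht.1) (Real.exp_nonneg _)
    · apply intervalIntegral.integral_nonneg hΔ0
      intro t ht
      refine mul_nonneg (erlangPDF_nonneg ha0 ht.1) ?_
      apply intervalIntegral.integral_nonneg (by linarith [ht.2])
      intro s hs
      have hμ : (0:ℝ) ≤ a * (Δ - t - s) := by
        have : (0:ℝ) ≤ Δ - t - s := by linarith [hs.2]
        positivity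
      exact mul_nonneg (mul_nonneg hlam0.le (Real.exp_nonneg _)) (poissonProb_nonneg hμ _)
  refine ⟨hnonneg, ?_⟩
  -- abbreviations
  set A : ℝ := ∑ k ∈ Finset.range l, poissonProb (a * Δ) k with hA
  set B : ℝ := ∫ t in (0:ℝ)..Δ, erlangPDF l a t * Real.exp (-lam * (Δ - t)) with hB
  have hCsum : Summable (fun j : ℕ => (a * Δ) ^ j / (j.factorial : ℝ)) :=
    (hasSum_pow_div_factorial (a * Δ)).summable
  -- inner HasSum
  have innerSum : ∀ t ∈ Set.Icc (0:ℝ) Δ,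
      HasSum (fun j : ℕ => ∫ s in (0:ℝ)..(Δ - t),
          lam * Real.exp (-lam * s) * poissonProb (a * (Δ - t - s)) j)
        (1 - Real.exp (-lam * (Δ - t))) := by
    intro t ht
    have hu : (0:ℝ) ≤ Δ - t := by linarith [ht.2]
    have key := intervalIntegral.hasSum_integral_of_dominated_convergence
      (μ := volume) (a := (0:ℝ)) (b := Δ - t)
      (F := fun j s => lam * Real.exp (-lam * s) * poissonProb (a * (Δ - t - s)) j)
      (f := fun s => lam * Real.exp (-lam * s))
      (bound := fun j _ => lam * ((a * Δ) ^ j / (j.factorial : ℝ)))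
      (fun j => by
        apply Continuous.aestronglyMeasurable
        exact (continuous_const.mul (by fun_prop)).mul
          ((continuous_poissonProb j).comp (by fun_prop)))
      (fun j => by
        filter_upwards with s hs
        rw [Set.uIoc_of_le hu] at hs
        have hs1 : (0:ℝ) < s := hs.1
        have hs2 : s ≤ Δ - t := hs.2
        have hμ0 : (0:ℝ) ≤ a * (Δ - t - s) := by nlinarith
        have hμc : a * (Δ - t - s) ≤ a * Δ := by nlinarith [ht.1]
        have hppn := poissonProb_nonneg hμ0 j
        rw [Real.norm_eq_abs, abs_of_nonneg
          (mul_nonneg (mul_nonneg hlam0.le (Real.exp_nonneg _)) hppn)]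
        have hexp : Real.exp (-lam * s) ≤ 1 :=
          Real.exp_le_one_iff.mpr (by nlinarith)
        calc lam * Real.exp (-lam * s) * poissonProb (a * (Δ - t - s)) j
            ≤ lam * 1 * ((a * Δ) ^ j / j.factorial) := by
              apply mul_le_mul (by nlinarith) (poissonProb_le hμ0 hμc j) hppn
                (by positivity)
          _ = lam * ((a * Δ) ^ j / j.factorial) := by ring)
      (by filter_upwards with s _; exact hCsum.mul_left lam)
      (intervalIntegrable_const)
      (by
        filter_upwards with s hs
        have := (hasSum_poissonProb (a * (Δ - t - s))).mul_left
          (lam * Real.exp (-lam * s))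
        simpa using this)
    rwa [integral_exp_lam lam (Δ - t)] at key
  -- outer HasSum
  have outerSum : HasSum
      (fun j : ℕ => ∫ t in (0:ℝ)..Δ, erlangPDF l a t *
        ∫ s in (0:ℝ)..(Δ - t),
          lam * Real.exp (-lam * s) * poissonProb (a * (Δ - t - s)) j)
      (∫ t in (0:ℝ)..Δ, erlangPDF l a t * (1 - Real.exp (-lam * (Δ - t)))) := by
    have hcontInner : ∀ j : ℕ, Continuous (fun t : ℝ => ∫ s in (0:ℝ)..(Δ - t),
        lam * Real.exp (-lam * s) * poissonProb (a * (Δ - t - s)) j) := by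
      intro j
      apply intervalIntegral.continuous_parametric_intervalIntegral_of_continuous
        (f := fun t s => lam * Real.exp (-lam * s) * poissonProb (a * (Δ - t - s)) j)
      · exact (continuous_const.mul (by fun_prop)).mul
          ((continuous_poissonProb j).comp (by fun_prop))
      · fun_prop
    apply intervalIntegral.hasSum_integral_of_dominated_convergence
      (bound := fun j t => erlangPDF l a t * (Δ * (lam * ((a * Δ) ^ j / (j.factorial : ℝ)))))
    · intro j
      exact ((continuous_erlangPDF l a).mul (hcontInner j)).aestronglyMeasurable
    · intro j
      filter_upwards with t ht
      rw [Set.uIoc_of_le hΔ0] at ht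
      have ht1 : (0:ℝ) ≤ t := ht.1.le
      have ht2 : t ≤ Δ := ht.2
      have hu : (0:ℝ) ≤ Δ - t := by linarith
      have hInnerNonneg : 0 ≤ ∫ s in (0:ℝ)..(Δ - t),
          lam * Real.exp (-lam * s) * poissonProb (a * (Δ - t - s)) j := by
        apply intervalIntegral.integral_nonneg hu
        intro s hs
        have hμ : (0:ℝ) ≤ a * (Δ - t - s) := by nlinarith [hs.2]
        exact mul_nonneg (mul_nonneg hlam0.le (Real.exp_nonneg _)) (poissonProb_nonneg hμ _)
      have hern := erlangPDF_nonneg (l := l) ha0 ht1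
      rw [Real.norm_eq_abs, abs_of_nonneg (mul_nonneg hern hInnerNonneg)]
      apply mul_le_mul_of_nonneg_left _ hern
      have hbnd : (∫ s in (0:ℝ)..(Δ - t),
          lam * Real.exp (-lam * s) * poissonProb (a * (Δ - t - s)) j)
          ≤ ∫ _s in (0:ℝ)..(Δ - t), lam * ((a * Δ) ^ j / (j.factorial : ℝ)) := by
        apply intervalIntegral.integral_mono_on hu
        · apply Continuous.intervalIntegrable
          exact (continuous_const.mul (by fun_prop)).mul
            ((continuous_poissonProb j).comp (by fun_prop))
        · exact intervalIntegrable_const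
        · intro s hs
          have hs1 : (0:ℝ) ≤ s := hs.1
          have hs2 : s ≤ Δ - t := hs.2
          have hμ0 : (0:ℝ) ≤ a * (Δ - t - s) := by nlinarith
          have hμc : a * (Δ - t - s) ≤ a * Δ := by nlinarith
          have hppn := poissonProb_nonneg hμ0 j
          have hexp : Real.exp (-lam * s) ≤ 1 :=
            Real.exp_le_one_iff.mpr (by nlinarith)
          calc lam * Real.exp (-lam * s) * poissonProb (a * (Δ - t - s)) j
              ≤ lam * 1 * ((a * Δ) ^ j / j.factorial) := by
                apply mul_le_mul (by nlinarith) (poissonProb_le hμ0 hμc j) hppn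
                  (by positivity)
            _ = lam * ((a * Δ) ^ j / j.factorial) := by ring
      rw [intervalIntegral.integral_const] at hbnd
      refine hbnd.trans ?_
      rw [smul_eq_mul, sub_zero]
      have : (0:ℝ) ≤ lam * ((a * Δ) ^ j / (j.factorial : ℝ)) := by positivity
      nlinarith
    · filter_upwards with t _
      exact ((hCsum.mul_left lam).mul_left Δ).mul_left (erlangPDF l a t)
    · have heq : (fun t => ∑' j : ℕ, erlangPDF l a t *
          (Δ * (lam * ((a * Δ) ^ j / (j.factorial : ℝ)))))
          = fun t => erlangPDF l a t * (Δ * (lam * Real.exp (a * Δ))) := by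
        funext t
        rw [tsum_mul_left, tsum_mul_left, tsum_mul_left,
          (hasSum_pow_div_factorial (a * Δ)).tsum_eq]
      rw [heq]
      exact ((continuous_erlangPDF l a).mul continuous_const).intervalIntegrable 0 Δ
    · filter_upwards with t ht
      rw [Set.uIoc_of_le hΔ0] at ht
      exact (innerSum t ⟨ht.1.le, ht.2⟩).mul_left (erlangPDF l a t)
  -- value of the outer sum
  have hsplit : (∫ t in (0:ℝ)..Δ, erlangPDF l a t * (1 - Real.exp (-lam * (Δ - t))))
      = (1 - A) - B := by
    have h1 : IntervalIntegrable (fun t => erlangPDF l a t) volume 0 Δ :=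
      (continuous_erlangPDF l a).intervalIntegrable 0 Δ
    have h2 : IntervalIntegrable (fun t => erlangPDF l a t * Real.exp (-lam * (Δ - t)))
        volume 0 Δ :=
      ((continuous_erlangPDF l a).mul (by fun_prop)).intervalIntegrable 0 Δ
    have : (∫ t in (0:ℝ)..Δ, erlangPDF l a t * (1 - Real.exp (-lam * (Δ - t))))
        = ∫ t in (0:ℝ)..Δ,
          (erlangPDF l a t - erlangPDF l a t * Real.exp (-lam * (Δ - t))) := by
      apply intervalIntegral.integral_congr
      intro t _
      ring
    rw [this, intervalIntegral.integral_sub h1 h2, integral_erlang a hl Δ, ← hA, ← hB]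
  rw [hsplit] at outerSum
  -- index shift
  have hshift : ∀ j : ℕ, PWL a lam Δ l (j + (l + 1))
      = ∫ t in (0:ℝ)..Δ, erlangPDF l a t *
        ∫ s in (0:ℝ)..(Δ - t),
          lam * Real.exp (-lam * s) * poissonProb (a * (Δ - t - s)) j := by
    intro j
    unfold PWL
    rw [if_neg (by omega), if_neg (by omega)]
    have : j + (l + 1) - l - 1 = j := by omega
    rw [this]
  have hsummShift : Summable (fun j : ℕ => PWL a lam Δ l (j + (l + 1))) :=
    outerSum.summable.congr fun j => (hshift j).symm
  have hsumm : Summable (PWL a lam Δ l) := (summable_nat_add_iff (l + 1)).mp hsummShift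
  have htsumShift : (∑' j : ℕ, PWL a lam Δ l (j + (l + 1))) = (1 - A) - B := by
    rw [tsum_congr hshift]
    exact outerSum.tsum_eq
  have hhead : (∑ i ∈ Finset.range (l + 1), PWL a lam Δ l i) = A + B := by
    rw [Finset.sum_range_succ]
    have h1 : (∑ i ∈ Finset.range l, PWL a lam Δ l i) = A := by
      apply Finset.sum_congr rfl
      intro i hi
      unfold PWL
      rw [if_pos (Finset.mem_range.mp hi)]
    have h2 : PWL a lam Δ l l = B := by
      unfold PWL
      rw [if_neg (lt_irrefl l), if_pos rfl]
    rw [h1, h2]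
  have := hsumm.sum_add_tsum_nat_add (l + 1)
  rw [hhead, htsumShift] at this
  rw [← this]
  ring
end
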